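/- Let A be a closed range operator on H such that |A| is diagonalizable, with polar decomposition A = V_A|A|. For each nonzero λ in the point spectrum of |A| let P_λ be the corresponding spectral projection and set V_λ = V_A P_λ. Then each V_λ is a partial isometry, A = Σ_λ λ V_λ (SOT convergence over nonzero eigenvalues), the families {V_λ V_λ*} and {V_λ* V_λ} each consist of mutually orthogonal projections, Σ_λ V_λ V_λ* = P_{R(A)}, and Σ_λ V_λ* V_λ = P_{R(A*)}. -/

import Mathlib

open ContinuousLinearMap
open scoped ENNReal
open scoped InnerProductSpace

noncomputable section

variable {H : Type*} [NormedAddCommGroup H] [InnerProductSpace ℂ H] [CompleteSpace H]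

/-- Reduced minimum modulus `γ(A) = inf {‖A f‖ : f ∈ N(A)ᗮ, ‖f‖ = 1}`. -/
def gamma (A : H →L[ℂ] H) : ℝ :=
  sInf {c : ℝ | ∃ f ∈ (LinearMap.ker (A : H →ₗ[ℂ] H))ᗮ, ‖f‖ = 1 ∧ c = ‖A f‖}

/-- `B` is the Moore–Penrose inverse of `A`. -/
def IsMoorePenrose (A B : H →L[ℂ] H) : Prop :=
  A ∘L B ∘L A = A ∧ B ∘L A ∘L B = B ∧ IsSelfAdjoint (A ∘L B) ∧ IsSelfAdjoint (B ∘L A)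

/-- `P` is an orthogonal projection. -/
def IsOrthoProj (P : H →L[ℂ] H) : Prop := P ∘L P = P ∧ IsSelfAdjoint P

/-- `P` is the orthogonal projection onto the subspace `S`. -/
def IsOrthoProjOnto (P : H →L[ℂ] H) (S : Submodule ℂ H) : Prop :=
  IsOrthoProj P ∧ LinearMap.range (P : H →ₗ[ℂ] H) = S

/-- `V` is a partial isometry. -/
def IsPartialIsom (V : H →L[ℂ] H) : Prop := V ∘L adjoint V ∘L V = V

/-- `A = V C` is the polar decomposition of `A`: `C = |A|` and `V = V_A` is the
partial isometry with `N(V) = N(A)`. -/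
def IsPolarDecomp (A V C : H →L[ℂ] H) : Prop :=
  A = V ∘L C ∧ C.IsPositive ∧ C ∘L C = adjoint A ∘L A ∧ IsPartialIsom V ∧
    LinearMap.ker (V : H →ₗ[ℂ] H) = LinearMap.ker (A : H →ₗ[ℂ] H)

/-- `J` is a two-sided ideal of `B(H)`. -/
structure IsTwoSidedIdeal (J : Set (H →L[ℂ] H)) : Prop where
  zero_mem : (0 : H →L[ℂ] H) ∈ J
  add_mem : ∀ {A B : H →L[ℂ] H}, A ∈ J → B ∈ J → A + B ∈ J
  neg_mem : ∀ {A : H →L[ℂ] H}, A ∈ J → -A ∈ J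
  mul_left : ∀ (B : H →L[ℂ] H) {A : H →L[ℂ] H}, A ∈ J → B ∘L A ∈ J
  mul_right : ∀ (B : H →L[ℂ] H) {A : H →L[ℂ] H}, A ∈ J → A ∘L B ∈ J

/-- `J` is a proper two-sided ideal of `B(H)`. -/
def IsProperIdeal (J : Set (H →L[ℂ] H)) : Prop :=
  IsTwoSidedIdeal J ∧ J ≠ {0} ∧ J ≠ Set.univ

/-- The `n`-th approximation number of `A`; for a compact operator this is the
`(n+1)`-th singular value `s_{n+1}(A)`. -/
def approxNum (A : H →L[ℂ] H) (n : ℕ) : ℝ :=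
  sInf {c : ℝ | ∃ F : H →L[ℂ] H, FiniteDimensional ℂ ↥(LinearMap.range (F : H →ₗ[ℂ] H)) ∧
    Module.finrank ℂ ↥(LinearMap.range (F : H →ₗ[ℂ] H)) ≤ n ∧ c = ‖A - F‖}

/-- Submajorization `s(B) ≺_w s(A)` of the singular value sequences. -/
def Submaj (B A : H →L[ℂ] H) : Prop :=
  ∀ n : ℕ, ∑ i ∈ Finset.range n, approxNum B i ≤ ∑ i ∈ Finset.range n, approxNum A i

/-- `J` is arithmetic mean closed. -/
def IsArithMeanClosed (J : Set (H →L[ℂ] H)) : Prop :=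
  ∀ A B : H →L[ℂ] H, A ∈ J → IsCompactOperator (⇑B) → Submaj B A → B ∈ J

/-- Symmetric norming function on the space of finitely supported real sequences. -/
structure IsSymmNormingFun (Φ : (ℕ →₀ ℝ) → ℝ) : Prop where
  triangle : ∀ x y, Φ (x + y) ≤ Φ x + Φ y
  homog : ∀ (c : ℝ) (x), Φ (c • x) = |c| * Φ x
  definite : ∀ x, Φ x = 0 → x = 0
  normalized : Φ (Finsupp.single 0 1) = 1
  symm : ∀ (σ : Equiv.Perm ℕ) (x), Φ (Finsupp.equivMapDomain σ x) = Φ x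
  abs_invariant : ∀ x, Φ (Finsupp.mapRange (fun t => |t|) abs_zero x) = Φ x

/-- The (possibly infinite) norm `‖A‖_Φ = sup_k Φ(s_1(A),…,s_k(A),0,…)`. -/
def phiNorm (Φ : (ℕ →₀ ℝ) → ℝ) (A : H →L[ℂ] H) : ℝ≥0∞ :=
  ⨆ k : ℕ, ENNReal.ofReal (Φ (∑ i ∈ Finset.range k, Finsupp.single i (approxNum A i)))

/-- `(P, Q)` is a Fredholm pair of projections: `Q P|_{R(P)} : R(P) → R(Q)` has
finite-dimensional kernel `R(P) ∩ N(Q)`, finite-dimensional cokernel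
(measured by `R(Q) ∩ N(P)`) and closed range. -/
def IsFredholmPair (P Q : H →L[ℂ] H) : Prop :=
  FiniteDimensional ℂ ↥(LinearMap.range (P : H →ₗ[ℂ] H) ⊓ LinearMap.ker (Q : H →ₗ[ℂ] H)) ∧
  FiniteDimensional ℂ ↥(LinearMap.range (Q : H →ₗ[ℂ] H) ⊓ LinearMap.ker (P : H →ₗ[ℂ] H)) ∧
  IsClosed (Q '' (LinearMap.range (P : H →ₗ[ℂ] H) : Set H))

/-- Essential codimension `[P : Q] = dim(N(Q) ∩ R(P)) − dim(R(Q) ∩ N(P))`. -/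
def essCodim (P Q : H →L[ℂ] H) : ℤ :=
  (Module.finrank ℂ ↥(LinearMap.range (P : H →ₗ[ℂ] H) ⊓ LinearMap.ker (Q : H →ₗ[ℂ] H)) : ℤ) -
    (Module.finrank ℂ ↥(LinearMap.range (Q : H →ₗ[ℂ] H) ⊓ LinearMap.ker (P : H →ₗ[ℂ] H)) : ℤ)

/-- `{f n}` is a frame for the closed subspace `S`. -/
def IsFrameFor (f : ℕ → H) (S : Submodule ℂ H) : Prop :=
  IsClosed (S : Set H) ∧ (∀ n, f n ∈ S) ∧
  ∃ α β : ℝ, 0 < α ∧ α ≤ β ∧ ∀ v ∈ S,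
    α * ‖v‖ ^ 2 ≤ ∑' n, ‖(inner ℂ v (f n) : ℂ)‖ ^ 2 ∧
    ∑' n, ‖(inner ℂ v (f n) : ℂ)‖ ^ 2 ≤ β * ‖v‖ ^ 2

/-- The nonzero point spectrum of `CA`, as an index type. -/
def specIdx (CA : H →L[ℂ] H) : Type _ :=
  {lam : ℝ // lam ≠ 0 ∧ LinearMap.ker (↑(CA - (lam : ℂ) • (1 : H →L[ℂ] H)) : H →ₗ[ℂ] H) ≠ ⊥}

lemma sa_inner {R : H →L[ℂ] H} (h : IsSelfAdjoint R) (x y : H) :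
    ⟪R x, y⟫_ℂ = ⟪x, R y⟫_ℂ := by
  conv_lhs => rw [← h.adjoint_eq]
  exact ContinuousLinearMap.adjoint_inner_left R y x

lemma idem_apply {R : H →L[ℂ] H} (h1 : R ∘L R = R) (u : H) : R (R u) = R u := by
  conv_rhs => rw [← h1]
  simp [ContinuousLinearMap.comp_apply]

lemma proj_fix {R : H →L[ℂ] H} (h1 : R ∘L R = R) (h2 : IsSelfAdjoint R) {v : H}
    (hv : ∀ w, R w = 0 → ⟪w, v⟫_ℂ = 0) : R v = v := by
  have hker : R (v - R v) = 0 := by rw [map_sub, idem_apply h1, sub_self]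
  have h0 : ⟪v - R v, v - R v⟫_ℂ = 0 := by
    rw [inner_sub_right, hv _ hker, ← sa_inner h2, hker, inner_zero_left, sub_zero]
  have := inner_self_eq_zero.mp h0
  rw [sub_eq_zero] at this
  exact this.symm

lemma proj_kill {R : H →L[ℂ] H} (h1 : R ∘L R = R) (h2 : IsSelfAdjoint R) {v : H}
    (hv : ∀ w, ⟪R w, v⟫_ℂ = 0) : R v = 0 := by
  have h0 : ⟪R v, R v⟫_ℂ = 0 := by
    have : ⟪R (R v), v⟫_ℂ = ⟪R v, R v⟫_ℂ := sa_inner h2 (R v) v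
    rw [idem_apply h1] at this
    rw [← this]; exact hv v
  exact inner_self_eq_zero.mp h0

lemma orthoproj_unique {R R' : H →L[ℂ] H} (h1 : R ∘L R = R) (h2 : IsSelfAdjoint R)
    (h1' : R' ∘L R' = R') (h2' : IsSelfAdjoint R')
    (hr : LinearMap.range (R : H →ₗ[ℂ] H) = LinearMap.range (R' : H →ₗ[ℂ] H)) : R = R' := by
  have key : ∀ (S T : H →L[ℂ] H), S ∘L S = S → IsSelfAdjoint S → T ∘L T = T →
      IsSelfAdjoint T → LinearMap.range (S : H →ₗ[ℂ] H) = LinearMap.range (T : H →ₗ[ℂ] H) → ∀ x, T x = S x := by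
    intro S T hS1 hS2 hT1 hT2 hST x
    have hdecomp : T x = T (S x) + T (x - S x) := by rw [← map_add, add_sub_cancel]
    have hz : T (x - S x) = 0 := by
      refine proj_kill hT1 hT2 fun w => ?_
      have hw : T w ∈ LinearMap.range (S : H →ₗ[ℂ] H) := hST ▸ LinearMap.mem_range_self (T : H →ₗ[ℂ] H) w
      obtain ⟨u, hu⟩ := hw
      simp only [ContinuousLinearMap.coe_coe] at hu
      rw [← hu, sa_inner hS2, map_sub, idem_apply hS1, sub_self, inner_zero_right]
    have hfix : T (S x) = S x := by
      refine proj_fix hT1 hT2 fun w hw => ?_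
      have hSx : S x ∈ LinearMap.range (T : H →ₗ[ℂ] H) := hST ▸ LinearMap.mem_range_self (S : H →ₗ[ℂ] H) x
      obtain ⟨u, hu⟩ := hSx
      simp only [ContinuousLinearMap.coe_coe] at hu
      rw [← hu, ← sa_inner hT2, hw, inner_zero_left]
    rw [hdecomp, hz, hfix, add_zero]
  ext x
  exact (key R R' h1 h2 h1' h2' hr x).symm

set_option maxHeartbeats 2000000 in
/-- block singular value decomposition: Let `A` be a closed range
operator with `|A|` diagonalizable and polar decomposition `A = V_A|A|`. For
each nonzero eigenvalue `λ` of `|A|` with spectral projection `P λ`, the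
operators `V_λ = V_A P_λ` are partial isometries, `A = Σ_λ λ V_λ` (SOT), the
families `{V_λ V_λ*}` and `{V_λ* V_λ}` consist of mutually orthogonal
projections, `Σ_λ V_λ V_λ* = P_{R(A)}` and `Σ_λ V_λ* V_λ = P_{R(A*)}`. -/
theorem stmt_16 [TopologicalSpace.SeparableSpace H]
    (A VA CA : H →L[ℂ] H)
    (hAcl : IsClosed (LinearMap.range (A : H →ₗ[ℂ] H) : Set H))
    (hApd : IsPolarDecomp A VA CA)
    (P : ℝ → H →L[ℂ] H)
    (hP : ∀ lam : ℝ,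
      IsOrthoProjOnto (P lam) (LinearMap.ker (↑(CA - (lam : ℂ) • (1 : H →L[ℂ] H)) : H →ₗ[ℂ] H)))
    (hdiag : (⨆ lam : ℝ,
      LinearMap.ker (↑(CA - (lam : ℂ) • (1 : H →L[ℂ] H)) : H →ₗ[ℂ] H)).topologicalClosure = ⊤)
    (PRA PRAs : H →L[ℂ] H)
    (hPRA : IsOrthoProjOnto PRA (LinearMap.range (A : H →ₗ[ℂ] H)))
    (hPRAs : IsOrthoProjOnto PRAs (LinearMap.range (↑(adjoint A) : H →ₗ[ℂ] H))) :
    (∀ l : specIdx CA, IsPartialIsom (VA ∘L P l.1)) ∧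
    (∀ x : H, HasSum (fun l : specIdx CA => (l.1 : ℂ) • (VA ∘L P l.1) x) (A x)) ∧
    (∀ l m : specIdx CA, l ≠ m →
      IsOrthoProj ((VA ∘L P l.1) ∘L adjoint (VA ∘L P l.1)) ∧
      ((VA ∘L P l.1) ∘L adjoint (VA ∘L P l.1)) ∘L
        ((VA ∘L P m.1) ∘L adjoint (VA ∘L P m.1)) = 0) ∧
    (∀ l m : specIdx CA, l ≠ m →
      IsOrthoProj (adjoint (VA ∘L P l.1) ∘L (VA ∘L P l.1)) ∧
      (adjoint (VA ∘L P l.1) ∘L (VA ∘L P l.1)) ∘L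
        (adjoint (VA ∘L P m.1) ∘L (VA ∘L P m.1)) = 0) ∧
    (∀ x : H, HasSum
      (fun l : specIdx CA => ((VA ∘L P l.1) ∘L adjoint (VA ∘L P l.1)) x) (PRA x)) ∧
    (∀ x : H, HasSum
      (fun l : specIdx CA => (adjoint (VA ∘L P l.1) ∘L (VA ∘L P l.1)) x) (PRAs x)) := by
  obtain ⟨hA, hCpos, hC2, hVpi, hkerV⟩ := hApd
  have hCsa : IsSelfAdjoint CA := hCpos.isSelfAdjoint
  set E : ℝ → Submodule ℂ H :=
    fun lam => LinearMap.ker (↑(CA - (lam : ℂ) • (1 : H →L[ℂ] H)) : H →ₗ[ℂ] H) with hEdef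
  -- basic facts about the P lam
  have hPid : ∀ (lam : ℝ) (x : H), P lam (P lam x) = P lam x :=
    fun lam x => idem_apply (hP lam).1.1 x
  have hPsa : ∀ lam : ℝ, IsSelfAdjoint (P lam) := fun lam => (hP lam).1.2
  have p_mem : ∀ (lam : ℝ) (x : H), P lam x ∈ E lam := by
    intro lam x
    simp only [hEdef]
    rw [← (hP lam).2]
    exact LinearMap.mem_range_self _ x
  have p_fixE : ∀ (lam : ℝ) (v : H), v ∈ E lam → P lam v = v := by
    intro lam v hv
    simp only [hEdef] at hv
    rw [← (hP lam).2] at hv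
    obtain ⟨u, hu⟩ := hv
    rw [← hu]; exact hPid lam u
  have eigv : ∀ (lam : ℝ) (v : H), v ∈ E lam → CA v = (lam : ℂ) • v := by
    intro lam v hv
    have : (CA - (lam : ℂ) • (1 : H →L[ℂ] H)) v = 0 := LinearMap.mem_ker.mp hv
    rwa [ContinuousLinearMap.sub_apply, ContinuousLinearMap.smul_apply,
      ContinuousLinearMap.one_apply, sub_eq_zero] at this
  have memE : ∀ (lam : ℝ) (v : H), CA v = (lam : ℂ) • v → v ∈ E lam := by
    intro lam v hv
    refine LinearMap.mem_ker.mpr ?_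
    show (CA - (lam : ℂ) • (1 : H →L[ℂ] H)) v = 0
    rw [ContinuousLinearMap.sub_apply, ContinuousLinearMap.smul_apply,
      ContinuousLinearMap.one_apply, hv, sub_self]
  have eig_orth : ∀ (l m : ℝ), l ≠ m → ∀ v ∈ E l, ∀ w ∈ E m, ⟪v, w⟫_ℂ = 0 := by
    intro l m hlm v hv w hw
    have h1 := sa_inner hCsa v w
    rw [eigv l v hv, eigv m w hw, inner_smul_left, inner_smul_right,
      Complex.conj_ofReal] at h1
    have h2 : ((l : ℂ) - m) * ⟪v, w⟫_ℂ = 0 := by rw [sub_mul, h1, sub_self]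
    rcases mul_eq_zero.mp h2 with h3 | h3
    · exact absurd (Complex.ofReal_inj.mp (sub_eq_zero.mp h3)) hlm
    · exact h3
  have PE_zero : ∀ (l m : ℝ), l ≠ m → ∀ v ∈ E m, P l v = 0 := by
    intro l m hlm v hv
    exact proj_kill (hP l).1.1 (hPsa l) fun w => eig_orth l m hlm _ (p_mem l w) v hv
  -- facts about Q = VA† VA
  set Q : H →L[ℂ] H := adjoint VA ∘L VA with hQdef
  have hVVV : ∀ u : H, VA (adjoint VA (VA u)) = VA u := by
    intro u
    have := congrArg (fun (T : H →L[ℂ] H) => T u) hVpi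
    simpa using this
  have hQQ : Q ∘L Q = Q := by
    ext x
    show adjoint VA (VA (adjoint VA (VA x))) = adjoint VA (VA x)
    rw [hVVV]
  have hQsa : IsSelfAdjoint Q := by
    rw [ContinuousLinearMap.isSelfAdjoint_iff']
    simp [hQdef, adjoint_comp, adjoint_adjoint]
  have kerVA : ∀ w : H, VA w = 0 ↔ A w = 0 := by
    intro w
    have := SetLike.ext_iff.mp hkerV w
    simpa [LinearMap.mem_ker] using this
  have kerVC : ∀ w : H, VA w = 0 ↔ CA w = 0 := by
    intro w
    have hinner : ⟪CA w, CA w⟫_ℂ = ⟪A w, A w⟫_ℂ := by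
      have h1 : CA (CA w) = adjoint A (A w) := by
        have := congrArg (fun (T : H →L[ℂ] H) => T w) hC2
        simpa using this
      rw [sa_inner hCsa, h1, ContinuousLinearMap.adjoint_inner_right]
    rw [kerVA]
    constructor
    · intro h
      have h0 : ⟪CA w, CA w⟫_ℂ = 0 := by rw [hinner, h, inner_zero_left]
      exact inner_self_eq_zero.mp h0
    · intro h
      have h0 : ⟪A w, A w⟫_ℂ = 0 := by rw [← hinner, h, inner_zero_left]
      exact inner_self_eq_zero.mp h0
  have kerQ : ∀ w : H, Q w = 0 ↔ CA w = 0 := by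
    intro w
    constructor
    · intro h
      have h1 : ⟪VA w, VA w⟫_ℂ = 0 := by
        have : ⟪w, Q w⟫_ℂ = ⟪VA w, VA w⟫_ℂ :=
          ContinuousLinearMap.adjoint_inner_right VA w (VA w)
        rw [h, inner_zero_right] at this
        exact this.symm
      exact (kerVC w).mp (inner_self_eq_zero.mp h1)
    · intro h
      show adjoint VA (VA w) = 0
      rw [(kerVC w).mpr h, map_zero]
  have QCA : ∀ x : H, Q (CA x) = CA x := by
    intro x
    refine proj_fix hQQ hQsa fun w hw => ?_
    have hCw : CA w = 0 := (kerQ w).mp hw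
    rw [← sa_inner hCsa w x, hCw, inner_zero_left]
  have CAQ : ∀ x : H, CA (Q x) = CA x := by
    have opQCA : Q ∘L CA = CA := by ext x; exact QCA x
    have := congrArg adjoint opQCA
    rw [adjoint_comp, hCsa.adjoint_eq, hQsa.adjoint_eq] at this
    intro x
    exact congrArg (fun (T : H →L[ℂ] H) => T x) this
  have memE0 : ∀ w : H, CA w = 0 → w ∈ E 0 := by
    intro w hw
    exact memE 0 w (by rw [hw, Complex.ofReal_zero, zero_smul])
  have QE : ∀ (lam : ℝ), lam ≠ 0 → ∀ v ∈ E lam, Q v = v := by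
    intro lam hlam v hv
    refine proj_fix hQQ hQsa fun w hw => ?_
    exact eig_orth 0 lam (Ne.symm hlam) w (memE0 w ((kerQ w).mp hw)) v hv
  have hQP : ∀ (l : specIdx CA) (x : H), adjoint VA (VA (P l.1 x)) = P l.1 x :=
    fun l x => QE l.1 l.2.1 _ (p_mem l.1 x)
  have hPQ : ∀ (l : specIdx CA) (x : H), P l.1 (adjoint VA (VA x)) = P l.1 x := by
    intro l x
    have opQP : Q ∘L P l.1 = P l.1 := by ext y; exact hQP l y
    have := congrArg adjoint opQP
    rw [adjoint_comp, hQsa.adjoint_eq, (hPsa l.1).adjoint_eq] at this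
    exact congrArg (fun (T : H →L[ℂ] H) => T x) this
  classical
  -- the span of the nonzero eigenspaces
  set S : Submodule ℂ H := ⨆ l : specIdx CA, E l.1 with hSdef
  have hmapsto : ∀ z ∈ (⨆ lam : ℝ, E lam : Submodule ℂ H), Q z ∈ S := by
    intro z hz
    rw [Submodule.mem_iSup_iff_exists_finsupp] at hz
    obtain ⟨f, hf, hfsum⟩ := hz
    rw [← hfsum, map_finsuppSum]
    refine Submodule.finsuppSum_mem ℂ S _ _ ?_
    intro lam _
    by_cases h0 : lam = 0
    · subst h0
      have : CA (f 0) = 0 := by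
        rw [eigv 0 _ (hf 0), Complex.ofReal_zero, zero_smul]
      rw [(kerQ _).mpr this]
      exact Submodule.zero_mem S
    · by_cases hbot : E lam = ⊥
      · have hfz : f lam = 0 := by
          have h := hf lam
          rw [hbot, Submodule.mem_bot] at h
          exact h
        rw [hfz, map_zero]
        exact Submodule.zero_mem S
      · rw [QE lam h0 _ (hf lam)]
        exact Submodule.mem_iSup_of_mem (⟨lam, h0, hbot⟩ : specIdx CA) (hf lam)
  have hdense : ∀ x : H, Q x ∈ closure (S : Set H) := by
    intro x
    have hx : x ∈ closure ((⨆ lam : ℝ, E lam : Submodule ℂ H) : Set H) := by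
      have h1 : x ∈ ((⨆ lam : ℝ, E lam).topologicalClosure : Set H) := by
        rw [hdiag]; trivial
      exact h1
    exact map_mem_closure Q.continuous hx hmapsto
  have claim : ∀ y : H, y ∈ closure (S : Set H) →
      HasSum (fun l : specIdx CA => P l.1 y) y := by
    intro y hy
    rw [HasSum, SummationFilter.unconditional_filter, Metric.tendsto_atTop]
    intro ε hε
    obtain ⟨z, hzS, hzd⟩ := Metric.mem_closure_iff.mp hy ε hε
    have hzS' : z ∈ (⨆ l : specIdx CA, E l.1 : Submodule ℂ H) := hzS
    rw [Submodule.mem_iSup_iff_exists_finsupp] at hzS'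
    obtain ⟨f, hf, hfsum⟩ := hzS'
    refine ⟨f.support, fun F hF => ?_⟩
    set T : H →L[ℂ] H := ∑ l ∈ F, P l.1 with hTdef
    have hTapp : ∀ u : H, T u = ∑ l ∈ F, P l.1 u := by
      intro u; rw [hTdef]; exact ContinuousLinearMap.sum_apply _ _ _
    have hne' : ∀ l m : specIdx CA, l ≠ m → (l.1 : ℝ) ≠ m.1 :=
      fun l m hlm h => hlm (Subtype.ext h)
    have hPP : ∀ (l m : specIdx CA) (u : H), l ≠ m → P l.1 (P m.1 u) = 0 :=
      fun l m u hlm => PE_zero l.1 m.1 (hne' l m hlm) _ (p_mem m.1 u)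
    have hTT : ∀ u : H, T (T u) = T u := by
      intro u
      rw [hTapp (T u)]
      have hterm : ∀ l ∈ F, P l.1 (T u) = P l.1 u := by
        intro l _
        rw [hTapp u, map_sum]
        rw [Finset.sum_eq_single_of_mem l (by assumption)]
        · exact hPid l.1 u
        · intro m hm hml
          exact hPP l m u (Ne.symm hml)
      rw [Finset.sum_congr rfl hterm, ← hTapp]
    have hTsa : ∀ u w : H, ⟪T u, w⟫_ℂ = ⟪u, T w⟫_ℂ := by
      intro u w
      rw [hTapp u, hTapp w, sum_inner, inner_sum]
      exact Finset.sum_congr rfl fun l _ => sa_inner (hPsa l.1) u w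
    have hPz : ∀ l : specIdx CA, P l.1 z = f l := by
      intro l
      have hz' : z = ∑ m ∈ f.support, f m := by rw [← hfsum]; rfl
      rw [hz', map_sum]
      by_cases hl : l ∈ f.support
      · rw [Finset.sum_eq_single_of_mem l hl
          fun m hm hml => PE_zero l.1 m.1 (hne' l m (Ne.symm hml)) _ (hf m)]
        exact p_fixE l.1 _ (hf l)
      · rw [Finset.sum_eq_zero fun m hm =>
          PE_zero l.1 m.1 (hne' l m fun he => hl (he.symm ▸ hm)) _ (hf m)]
        exact (Finsupp.notMem_support_iff.mp hl).symm
    have hTz : T z = z := by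
      rw [hTapp z, Finset.sum_congr rfl fun l _ => hPz l]
      rw [← Finset.sum_subset hF fun l _ hl => Finsupp.notMem_support_iff.mp hl]
      exact hfsum
    have horth : ⟪y - T y, T y - z⟫_ℂ = 0 := by
      have h1 : T y - z = T (y - z) := by rw [map_sub, hTz]
      rw [h1, ← hTsa, map_sub, hTT, sub_self, inner_zero_left]
    have hnorm : ‖y - z‖ * ‖y - z‖ =
        ‖y - T y‖ * ‖y - T y‖ + ‖T y - z‖ * ‖T y - z‖ := by
      have hdec : y - z = (y - T y) + (T y - z) := by abel
      rw [hdec]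
      exact norm_add_sq_eq_norm_sq_add_norm_sq_of_inner_eq_zero _ _ horth
    have hle : ‖y - T y‖ ≤ ‖y - z‖ := by
      nlinarith [norm_nonneg (y - T y), norm_nonneg (y - z),
        mul_self_nonneg ‖T y - z‖, hnorm]
    calc dist (∑ l ∈ F, P l.1 y) y = ‖y - T y‖ := by
            rw [dist_eq_norm, ← hTapp, norm_sub_rev]
      _ ≤ ‖y - z‖ := hle
      _ = dist y z := (dist_eq_norm y z).symm
      _ < ε := hzd
  have master : ∀ x : H, HasSum (fun l : specIdx CA => P l.1 x) (Q x) := by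
    intro x
    have h := claim (Q x) (hdense x)
    have heq : (fun l : specIdx CA => P l.1 (Q x)) = fun l : specIdx CA => P l.1 x :=
      funext fun l => hPQ l x
    rwa [heq] at h
  -- range facts
  have hSrange : S ≤ LinearMap.range (CA : H →ₗ[ℂ] H) := by
    refine iSup_le fun l => ?_
    intro v hv
    refine ⟨(l.1 : ℂ)⁻¹ • v, ?_⟩
    rw [map_smul, ContinuousLinearMap.coe_coe, eigv l.1 v hv, smul_smul, inv_mul_cancel₀, one_smul]
    exact_mod_cast Complex.ofReal_ne_zero.mpr l.2.1
  have hQCA : ∀ x : H, Q x ∈ LinearMap.range (CA : H →ₗ[ℂ] H) := by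
    intro x
    have hclos : Q x ∈ closure ((LinearMap.range (CA : H →ₗ[ℂ] H) : Submodule ℂ H) : Set H) :=
      closure_mono hSrange (hdense x)
    obtain ⟨u, hu_mem, hu_lim⟩ := mem_closure_iff_seq_limit.mp hclos
    choose g hg using hu_mem
    simp only [ContinuousLinearMap.coe_coe] at hg
    have hA_lim : Filter.Tendsto (fun n => A (g n)) Filter.atTop (nhds (VA (Q x))) := by
      have hfun : (fun n => A (g n)) = fun n => VA (u n) := by
        funext n
        rw [hA, ContinuousLinearMap.comp_apply, hg]
      rw [hfun]
      exact (VA.continuous.tendsto _).comp hu_lim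
    have hmem : VA (Q x) ∈ LinearMap.range (A : H →ₗ[ℂ] H) :=
      hAcl.mem_of_tendsto hA_lim
        (Filter.Eventually.of_forall fun n => LinearMap.mem_range_self _ _)
    obtain ⟨v, hv⟩ := hmem
    simp only [ContinuousLinearMap.coe_coe] at hv
    have hker : VA (Q x - CA v) = 0 := by
      rw [map_sub, ← hv, hA, ContinuousLinearMap.comp_apply, sub_self]
    have hCker : CA (Q x - CA v) = 0 := (kerVC _).mp hker
    have h1 : ⟪Q x - CA v, Q x - CA v⟫_ℂ = 0 := by
      rw [inner_sub_right]
      have ha : ⟪Q x - CA v, Q x⟫_ℂ = 0 := by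
        rw [← sa_inner hQsa, (kerQ _).mpr hCker, inner_zero_left]
      have hb : ⟪Q x - CA v, CA v⟫_ℂ = 0 := by
        rw [← sa_inner hCsa, hCker, inner_zero_left]
      rw [ha, hb, sub_zero]
    exact ⟨v, (sub_eq_zero.mp (inner_self_eq_zero.mp h1)).symm⟩
  -- the six parts
  have part4eq : ∀ l : specIdx CA,
      adjoint (VA ∘L P l.1) ∘L (VA ∘L P l.1) = P l.1 := by
    intro l
    ext x
    simp only [ContinuousLinearMap.comp_apply, adjoint_comp, (hPsa l.1).adjoint_eq]
    rw [hQP l, hPid]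
  have part1 : ∀ l : specIdx CA, IsPartialIsom (VA ∘L P l.1) := by
    intro l
    show (VA ∘L P l.1) ∘L adjoint (VA ∘L P l.1) ∘L (VA ∘L P l.1) = VA ∘L P l.1
    ext x
    simp only [ContinuousLinearMap.comp_apply, adjoint_comp, (hPsa l.1).adjoint_eq]
    rw [hQP l, hPid, hPid]
  have part2 : ∀ x : H,
      HasSum (fun l : specIdx CA => (l.1 : ℂ) • (VA ∘L P l.1) x) (A x) := by
    intro x
    have h := (master x).mapL A
    have heq : (fun l : specIdx CA => A (P l.1 x)) =
        fun l : specIdx CA => (l.1 : ℂ) • (VA ∘L P l.1) x := by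
      funext l
      rw [hA]
      simp only [ContinuousLinearMap.comp_apply]
      rw [eigv l.1 _ (p_mem l.1 x), map_smul]
    have hAx : A (Q x) = A x := by
      rw [hA]
      simp only [ContinuousLinearMap.comp_apply]
      rw [CAQ]
    rwa [heq, hAx] at h
  have hne' : ∀ l m : specIdx CA, l ≠ m → (l.1 : ℝ) ≠ m.1 :=
    fun l m hlm h => hlm (Subtype.ext h)
  have part3 : ∀ l m : specIdx CA, l ≠ m →
      IsOrthoProj ((VA ∘L P l.1) ∘L adjoint (VA ∘L P l.1)) ∧
      ((VA ∘L P l.1) ∘L adjoint (VA ∘L P l.1)) ∘L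
        ((VA ∘L P m.1) ∘L adjoint (VA ∘L P m.1)) = 0 := by
    intro l m hlm
    refine ⟨⟨?_, ?_⟩, ?_⟩
    · ext x
      simp only [ContinuousLinearMap.comp_apply, adjoint_comp, (hPsa l.1).adjoint_eq, hPid]
      rw [hQP l, hPid]
    · rw [ContinuousLinearMap.isSelfAdjoint_iff']
      rw [adjoint_comp, adjoint_adjoint]
    · ext x
      simp only [ContinuousLinearMap.comp_apply, adjoint_comp, (hPsa l.1).adjoint_eq,
        (hPsa m.1).adjoint_eq, hPid, ContinuousLinearMap.zero_apply]
      rw [hQP m, PE_zero l.1 m.1 (hne' l m hlm) _ (p_mem m.1 _), map_zero]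
  have part4 : ∀ l m : specIdx CA, l ≠ m →
      IsOrthoProj (adjoint (VA ∘L P l.1) ∘L (VA ∘L P l.1)) ∧
      (adjoint (VA ∘L P l.1) ∘L (VA ∘L P l.1)) ∘L
        (adjoint (VA ∘L P m.1) ∘L (VA ∘L P m.1)) = 0 := by
    intro l m hlm
    rw [part4eq l, part4eq m]
    refine ⟨⟨(hP l.1).1.1, hPsa l.1⟩, ?_⟩
    ext x
    simp only [ContinuousLinearMap.comp_apply, ContinuousLinearMap.zero_apply]
    exact PE_zero l.1 m.1 (hne' l m hlm) _ (p_mem m.1 x)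
  -- PRA = VA VA*
  have hQ2Q2 : (VA ∘L adjoint VA) ∘L (VA ∘L adjoint VA) = VA ∘L adjoint VA := by
    ext x
    show VA (adjoint VA (VA (adjoint VA x))) = VA (adjoint VA x)
    rw [hVVV]
  have hQ2sa : IsSelfAdjoint (VA ∘L adjoint VA) := by
    rw [ContinuousLinearMap.isSelfAdjoint_iff']
    rw [adjoint_comp, adjoint_adjoint]
  have rangeVA : ∀ u : H, VA u ∈ LinearMap.range (A : H →ₗ[ℂ] H) := by
    intro u
    obtain ⟨c, hc⟩ := hQCA u
    simp only [ContinuousLinearMap.coe_coe] at hc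
    refine ⟨c, ?_⟩
    rw [hA, ContinuousLinearMap.coe_coe, ContinuousLinearMap.comp_apply, hc]
    exact hVVV u
  have hrgeQ2 : LinearMap.range ((VA ∘L adjoint VA : H →L[ℂ] H) : H →ₗ[ℂ] H) = LinearMap.range (A : H →ₗ[ℂ] H) := by
    apply le_antisymm
    · rintro _ ⟨u, rfl⟩
      exact rangeVA _
    · rintro _ ⟨u, rfl⟩
      refine ⟨VA (CA u), ?_⟩
      show VA (adjoint VA (VA (CA u))) = A u
      rw [hVVV, hA]
      rfl
  have hPRAeq : PRA = VA ∘L adjoint VA :=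
    orthoproj_unique hPRA.1.1 hPRA.1.2 hQ2Q2 hQ2sa (hPRA.2.trans hrgeQ2.symm)
  have part5 : ∀ x : H, HasSum
      (fun l : specIdx CA => ((VA ∘L P l.1) ∘L adjoint (VA ∘L P l.1)) x) (PRA x) := by
    intro x
    have h := (master (adjoint VA x)).mapL VA
    have heq : (fun l : specIdx CA => VA (P l.1 (adjoint VA x))) =
        fun l : specIdx CA => ((VA ∘L P l.1) ∘L adjoint (VA ∘L P l.1)) x := by
      funext l
      simp only [ContinuousLinearMap.comp_apply, adjoint_comp, (hPsa l.1).adjoint_eq, hPid]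
    have hval : VA (Q (adjoint VA x)) = PRA x := by
      rw [hPRAeq]
      show VA (adjoint VA (VA (adjoint VA x))) = VA (adjoint VA x)
      exact hVVV _
    rwa [heq, hval] at h
  -- PRAs = Q
  have hAadj : adjoint A = CA ∘L adjoint VA := by
    rw [hA, adjoint_comp, hCsa.adjoint_eq]
  have hrgeQ : LinearMap.range (Q : H →ₗ[ℂ] H) = LinearMap.range (↑(adjoint A) : H →ₗ[ℂ] H) := by
    apply le_antisymm
    · rintro _ ⟨y, rfl⟩
      obtain ⟨u, hu⟩ := hQCA y
      refine ⟨VA u, ?_⟩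
      rw [hAadj, ContinuousLinearMap.coe_coe, ContinuousLinearMap.comp_apply]
      show CA (adjoint VA (VA u)) = Q y
      have : CA (Q u) = CA u := CAQ u
      calc CA (adjoint VA (VA u)) = CA u := CAQ u
        _ = Q y := hu
    · rintro _ ⟨u, rfl⟩
      refine ⟨CA (adjoint VA u), ?_⟩
      show adjoint VA (VA (CA (adjoint VA u))) = adjoint A u
      rw [hAadj]
      exact QCA (adjoint VA u)
  have hPRAseq : PRAs = Q :=
    orthoproj_unique hPRAs.1.1 hPRAs.1.2 hQQ hQsa (hPRAs.2.trans hrgeQ.symm)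
  have part6 : ∀ x : H, HasSum
      (fun l : specIdx CA => (adjoint (VA ∘L P l.1) ∘L (VA ∘L P l.1)) x) (PRAs x) := by
    intro x
    have heq : (fun l : specIdx CA => (adjoint (VA ∘L P l.1) ∘L (VA ∘L P l.1)) x) =
        fun l : specIdx CA => P l.1 x := by
      funext l
      rw [part4eq l]
    rw [heq, hPRAseq]
    exact master x
  exact ⟨part1, part2, part3, part4, part5, part6⟩

end
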